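/- Let P be an interval order with atom set A. Define a relation ≺ on A by a ≺ b iff a has a cover that is not greater than b. Then ≺ is a strict partial order on A (irreflexive, antisymmetric, and transitive). -/
import Mathlib


/-- A poset is `(2+2)`-free (an interval order) if it contains no induced subposet
isomorphic to the disjoint union of two 2-element chains. -/
def TwoPlusTwoFree (P : Type*) [Preorder P] : Prop :=
  ¬ ∃ a b c d : P, a < b ∧ c < d ∧
    ¬ a ≤ c ∧ ¬ c ≤ a ∧ ¬ a ≤ d ∧ ¬ d ≤ a ∧ ¬ b ≤ c ∧ ¬ c ≤ b ∧ ¬ b ≤ d ∧ ¬ d ≤ b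

/-- The relation on atoms of a bounded poset: `a ≺ b` iff `a` has a cover that is not
greater than `b`. -/
def AtomPrec {P : Type*} [PartialOrder P] (a b : P) : Prop :=
  ∃ c : P, a ⋖ c ∧ ¬ b < c

private lemma atom_le_atom {P : Type*} [PartialOrder P] [OrderBot P] {a b : P}
    (ha : IsAtom a) (hb : IsAtom b) (hab : a ≤ b) : a = b := by
  rcases lt_or_eq_of_le hab with hlt | he
  · exact absurd (hb.2 a hlt) ha.1
  · exact he

/-- In an interval order, the relation `a ≺ b` iff `a` has a cover not greater than `b`
is a strict partial order on the set of atoms: irreflexive, antisymmetric and transitive. -/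
theorem stmt16 {P : Type*} [Fintype P] [PartialOrder P] [BoundedOrder P]
    (h : TwoPlusTwoFree P) :
    (∀ a : P, IsAtom a → ¬ AtomPrec a a) ∧
    (∀ a b : P, IsAtom a → IsAtom b → AtomPrec a b → AtomPrec b a → a = b) ∧
    (∀ a b c : P, IsAtom a → IsAtom b → IsAtom c →
      AtomPrec a b → AtomPrec b c → AtomPrec a c) := by
  refine ⟨?_, ?_, ?_⟩
  · rintro a _ ⟨c, hac, hnc⟩
    exact hnc hac.lt
  · rintro a b ha hb ⟨c, hac, hbc⟩ ⟨d, hbd, had⟩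
    by_contra hne
    -- atoms a, b are incomparable
    have hab : ¬ a ≤ b := fun hle => hne (atom_le_atom ha hb hle)
    have hba : ¬ b ≤ a := fun hle => hne (atom_le_atom hb ha hle).symm
    apply h
    refine ⟨a, c, b, d, hac.lt, hbd.lt, hab, hba, ?_, ?_, ?_, ?_, ?_, ?_⟩
    · -- ¬ a ≤ d
      intro hle
      rcases lt_or_eq_of_le hle with hlt | he
      · exact had hlt
      · exact hba (he ▸ hbd.lt.le)
    · -- ¬ d ≤ a
      intro hle
      exact hba (hbd.lt.le.trans hle)
    · -- ¬ c ≤ b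
      intro hle
      exact hab (hac.lt.le.trans hle)
    · -- ¬ b ≤ c
      intro hle
      rcases lt_or_eq_of_le hle with hlt | he
      · exact hbc hlt
      · exact hab (he ▸ hac.lt.le)
    · -- ¬ c ≤ d
      intro hle
      exact had (lt_of_lt_of_le hac.lt hle)
    · -- ¬ d ≤ c
      intro hle
      exact hbc (lt_of_lt_of_le hbd.lt hle)
  · rintro a b c ha hb hc ⟨c₁, hac₁, hbc₁⟩ ⟨c₂, hbc₂, hcc₂⟩
    refine ⟨c₁, hac₁, fun hcc₁ => ?_⟩
    -- chains b < c₂ and c < c₁ form a 2+2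
    have hbc' : b ≠ c := fun he => hcc₂ (he ▸ hbc₂.lt)
    have hbcle : ¬ b ≤ c := fun hle => hbc' (atom_le_atom hb hc hle)
    have hcble : ¬ c ≤ b := fun hle => hbc' (atom_le_atom hc hb hle).symm
    apply h
    refine ⟨b, c₂, c, c₁, hbc₂.lt, hcc₁, hbcle, hcble, ?_, ?_, ?_, ?_, ?_, ?_⟩
    · -- ¬ b ≤ c₁
      intro hle
      rcases lt_or_eq_of_le hle with hlt | he
      · exact hbc₁ hlt
      · exact absurd (atom_le_atom ha hb (he ▸ hac₁.lt.le)) (he ▸ hac₁.lt).ne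
    · -- ¬ c₁ ≤ b
      intro hle
      exact hcble (hcc₁.le.trans hle)
    · -- ¬ c₂ ≤ c
      intro hle
      exact hbcle (hbc₂.lt.le.trans hle)
    · -- ¬ c ≤ c₂
      intro hle
      rcases lt_or_eq_of_le hle with hlt | he
      · exact hcc₂ hlt
      · exact hbcle (hbc₂.lt.le.trans he.symm.le)
    · -- ¬ c₂ ≤ c₁
      intro hle
      exact hbc₁ (lt_of_lt_of_le hbc₂.lt hle)
    · -- ¬ c₁ ≤ c₂
      intro hle
      exact hcc₂ (lt_of_lt_of_le hcc₁ hle)
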